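/- Assume β = 0 and 0 < ω < 2, and that λmin⁺ > 0 (exactness). Let x* be the orthogonal projection of x0 onto {x : A x = b}. Then the SGD iterates x_{k+1} = x_k − ω Aᵀ H_k (A x_k − b) satisfy, for all k ≥ 0, E[‖x_k − x*‖²] ≤ (1 − ω(2−ω)λmin⁺)^k ‖x0 − x*‖². -/

import Mathlib

open Matrix MeasureTheory ProbabilityTheory

/-- Matrices over measurable entries carry the product σ-algebra. -/
local instance {m n : ℕ} : MeasurableSpace (Matrix (Fin m) (Fin n) ℝ) :=
  MeasurableSpace.pi

namespace SGDAux

lemma meas_entry {m n : ℕ} {Ω : Type*} [MeasurableSpace Ω]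
    {M : Ω → Matrix (Fin m) (Fin n) ℝ} (hM : Measurable M) (i : Fin m) (j : Fin n) :
    Measurable (fun s => M s i j) :=
  (measurable_pi_apply j).comp ((measurable_pi_apply i).comp hM)

lemma meas_mulVec {m n : ℕ} {Ω : Type*} [MeasurableSpace Ω]
    {M : Ω → Matrix (Fin m) (Fin n) ℝ} {v : Ω → Fin n → ℝ}
    (hM : Measurable M) (hv : Measurable v) :
    Measurable (fun s => M s *ᵥ v s) := by
  apply measurable_pi_lambda
  intro i
  simp only [Matrix.mulVec, dotProduct]
  exact Finset.measurable_sum _ fun j _ =>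
    (meas_entry hM i j).mul ((measurable_pi_apply j).comp hv)

lemma meas_dot {n : ℕ} {Ω : Type*} [MeasurableSpace Ω]
    {v w : Ω → Fin n → ℝ} (hv : Measurable v) (hw : Measurable w) :
    Measurable (fun s => v s ⬝ᵥ w s) := by
  simp only [dotProduct]
  exact Finset.measurable_sum _ fun j _ =>
    ((measurable_pi_apply j).comp hv).mul ((measurable_pi_apply j).comp hw)

lemma dot_self_nonneg {n : ℕ} (v : Fin n → ℝ) : 0 ≤ v ⬝ᵥ v :=
  Finset.sum_nonneg fun i _ => mul_self_nonneg (v i)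

lemma sq_le_dot_self {n : ℕ} (v : Fin n → ℝ) (i : Fin n) : v i * v i ≤ v ⬝ᵥ v := by
  unfold dotProduct
  exact Finset.single_le_sum (fun j _ => mul_self_nonneg (v j)) (Finset.mem_univ i)

lemma prod_le_dot_self {n : ℕ} (v : Fin n → ℝ) (i j : Fin n) : |v i * v j| ≤ v ⬝ᵥ v := by
  have h1 := sq_le_dot_self v i
  have h2 := sq_le_dot_self v j
  have key : |v i * v j| ≤ (v i * v i + v j * v j) / 2 := by
    rw [abs_mul]
    have h3 : 0 ≤ (|v i| - |v j|) * (|v i| - |v j|) := mul_self_nonneg _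
    have h4 : |v i| * |v i| = v i * v i := abs_mul_abs_self (v i)
    have h5 : |v j| * |v j| = v j * v j := abs_mul_abs_self (v j)
    nlinarith
  linarith

lemma bilin_id {a c n : ℕ} (B : Matrix (Fin a) (Fin n) ℝ) (C : Matrix (Fin a) (Fin c) ℝ)
    (x : Fin n → ℝ) (y : Fin c → ℝ) :
    (B *ᵥ x) ⬝ᵥ (C *ᵥ y) = x ⬝ᵥ ((Bᵀ * C) *ᵥ y) := by
  rw [dotProduct_mulVec, ← vecMul_transpose, vecMul_vecMul, dotProduct_mulVec]

lemma herm_transpose {n : ℕ} {H : Matrix (Fin n) (Fin n) ℝ} (h : H.IsHermitian) : Hᵀ = H := by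
  ext i j
  simpa using congrFun (congrFun h i) j

/-- Key algebraic identity for one SGD step. -/
lemma key_id {m d : ℕ} (A : Matrix (Fin m) (Fin d) ℝ) (H : Matrix (Fin m) (Fin m) ℝ)
    (hsym : Hᵀ = H) (hH : H * (A * Aᵀ) * H = H) (e : Fin d → ℝ) (ω : ℝ) :
    (e - ω • (Aᵀ *ᵥ (H *ᵥ (A *ᵥ e)))) ⬝ᵥ (e - ω • (Aᵀ *ᵥ (H *ᵥ (A *ᵥ e)))) =
      e ⬝ᵥ e - (ω * (2 - ω)) * ((A *ᵥ e) ⬝ᵥ (H *ᵥ (A *ᵥ e))) := by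
  set u := A *ᵥ e with hu
  set w := Aᵀ *ᵥ (H *ᵥ u) with hwdef
  have h1 : e ⬝ᵥ w = u ⬝ᵥ (H *ᵥ u) := by
    rw [hwdef, dotProduct_mulVec, vecMul_transpose]
  have h2 : w ⬝ᵥ e = u ⬝ᵥ (H *ᵥ u) := by rw [dotProduct_comm]; exact h1
  have h3 : w ⬝ᵥ w = u ⬝ᵥ (H *ᵥ u) := by
    rw [hwdef, mulVec_mulVec, bilin_id, transpose_mul, transpose_transpose, hsym,
      ← Matrix.mul_assoc (H*A) Aᵀ H, Matrix.mul_assoc H A Aᵀ, hH]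
  rw [sub_dotProduct, dotProduct_sub, dotProduct_sub, smul_dotProduct, smul_dotProduct,
    dotProduct_smul, dotProduct_smul, h1, h2, h3]
  simp only [smul_eq_mul]
  ring

/-- The quadratic form of a psd `H` with `H A Aᵀ H = H` is a contraction along `A`. -/
lemma contraction {m d : ℕ} (A : Matrix (Fin m) (Fin d) ℝ) (H : Matrix (Fin m) (Fin m) ℝ)
    (hpsd : H.PosSemidef) (hH : H * (A * Aᵀ) * H = H) (v : Fin d → ℝ) :
    (A *ᵥ v) ⬝ᵥ (H *ᵥ (A *ᵥ v)) ≤ v ⬝ᵥ v := by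
  have hsym : Hᵀ = H := herm_transpose hpsd.1
  set u := A *ᵥ v with hu
  set w := Aᵀ *ᵥ (H *ᵥ u) with hwdef
  set t := u ⬝ᵥ (H *ᵥ u) with ht
  have htnn : 0 ≤ t := by simpa using hpsd.dotProduct_mulVec_nonneg u
  have h1 : v ⬝ᵥ w = t := by rw [hwdef, dotProduct_mulVec, vecMul_transpose]
  have h3 : w ⬝ᵥ w = t := by
    rw [hwdef, mulVec_mulVec, bilin_id, transpose_mul, transpose_transpose, hsym,
      ← Matrix.mul_assoc (H*A) Aᵀ H, Matrix.mul_assoc H A Aᵀ, hH]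
  have hcs : (v ⬝ᵥ w) ^ 2 ≤ (v ⬝ᵥ v) * (w ⬝ᵥ w) := by
    have := Finset.sum_mul_sq_le_sq_mul_sq Finset.univ v w
    simpa [dotProduct, sq] using this
  rw [h1, h3] at hcs
  nlinarith [dot_self_nonneg v]

lemma quad_bound {n : ℕ} (M : Matrix (Fin n) (Fin n) ℝ) (v : Fin n → ℝ) :
    |v ⬝ᵥ (M *ᵥ v)| ≤ (∑ i, ∑ j, |M i j|) * (v ⬝ᵥ v) := by
  have h : v ⬝ᵥ (M *ᵥ v) = ∑ i, ∑ j, M i j * (v i * v j) := by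
    simp only [dotProduct, Matrix.mulVec, Finset.mul_sum]
    exact Finset.sum_congr rfl fun i _ => Finset.sum_congr rfl fun j _ => by ring
  rw [h, Finset.sum_mul]
  refine (Finset.abs_sum_le_sum_abs _ _).trans (Finset.sum_le_sum fun i _ => ?_)
  rw [Finset.sum_mul]
  refine (Finset.abs_sum_le_sum_abs _ _).trans (Finset.sum_le_sum fun j _ => ?_)
  rw [abs_mul]
  exact mul_le_mul_of_nonneg_left (prod_le_dot_self v i j) (abs_nonneg _)

lemma dot_quad_expand {n : ℕ} (M : Matrix (Fin n) (Fin n) ℝ) (u : Fin n → ℝ) :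
    u ⬝ᵥ (M *ᵥ u) = ∑ i, ∑ j, (u i * u j) * M i j := by
  simp only [dotProduct, Matrix.mulVec, Finset.mul_sum]
  exact Finset.sum_congr rfl fun i _ => Finset.sum_congr rfl fun j _ => by ring

/-- The variational characterization of orthogonality. -/
lemma proj_orth {d : ℕ} (v z : Fin d → ℝ) (hzz : 0 < z ⬝ᵥ z)
    (h : ∀ t : ℝ, v ⬝ᵥ v ≤ (v - t • z) ⬝ᵥ (v - t • z)) : v ⬝ᵥ z = 0 := by
  have hexp : ∀ t : ℝ, (v - t • z) ⬝ᵥ (v - t • z)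
      = v ⬝ᵥ v - 2 * t * (v ⬝ᵥ z) + t ^ 2 * (z ⬝ᵥ z) := by
    intro t
    simp only [sub_dotProduct, dotProduct_sub, smul_dotProduct, dotProduct_smul,
      smul_eq_mul, dotProduct_comm z v]
    ring
  have h' := h ((v ⬝ᵥ z) / (z ⬝ᵥ z))
  rw [hexp] at h'
  have hne : z ⬝ᵥ z ≠ 0 := ne_of_gt hzz
  have e1 : -2 * ((v ⬝ᵥ z) / (z ⬝ᵥ z)) * (v ⬝ᵥ z) + ((v ⬝ᵥ z) / (z ⬝ᵥ z)) ^ 2 * (z ⬝ᵥ z)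
      = -((v ⬝ᵥ z) ^ 2 / (z ⬝ᵥ z)) := by
    field_simp
    ring
  have h2 : (v ⬝ᵥ z) ^ 2 / (z ⬝ᵥ z) ≤ 0 := by nlinarith [h', e1]
  have h3 : 0 ≤ (v ⬝ᵥ z) ^ 2 / (z ⬝ᵥ z) := div_nonneg (sq_nonneg _) (le_of_lt hzz)
  have h4 : (v ⬝ᵥ z) ^ 2 / (z ⬝ᵥ z) = 0 := le_antisymm h2 h3
  field_simp at h4
  simpa using h4

/-- If `v` is orthogonal to `ker A`, then `v ∈ range Aᵀ`. -/
lemma mem_range_transpose {m d : ℕ} (A : Matrix (Fin m) (Fin d) ℝ) (v : Fin d → ℝ)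
    (h : ∀ z : Fin d → ℝ, A *ᵥ z = 0 → v ⬝ᵥ z = 0) : ∃ u, v = Aᵀ *ᵥ u := by
  classical
  let E := EuclideanSpace ℝ (Fin d)
  let eq : E ≃ₗ[ℝ] (Fin d → ℝ) := WithLp.linearEquiv 2 ℝ (Fin d → ℝ)
  let K : Submodule ℝ E := (LinearMap.range (Matrix.mulVecLin Aᵀ)).comap (eq : E →ₗ[ℝ] (Fin d → ℝ))
  obtain ⟨w, hwK, hw⟩ := Submodule.HasOrthogonalProjection.exists_orthogonal (K := K) (eq.symm v)
  obtain ⟨u0, hu0⟩ : ∃ u0, Aᵀ *ᵥ u0 = eq w := by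
    simpa only [K, Submodule.mem_comap, LinearMap.mem_range, Matrix.mulVecLin_apply, LinearEquiv.coe_coe] using hwK
  have hinner : ∀ a b : Fin d → ℝ, (inner ℝ (eq.symm a) (eq.symm b) : ℝ) = a ⬝ᵥ b := by
    intro a b
    rw [show (inner ℝ (eq.symm a) (eq.symm b) : ℝ)
        = inner (𝕜 := ℝ) (E := EuclideanSpace ℝ (Fin d)) ((WithLp.equiv 2 (Fin d → ℝ)).symm a)
            ((WithLp.equiv 2 (Fin d → ℝ)).symm b) from rfl]
    simp [PiLp.inner_apply, WithLp.equiv_symm_apply, PiLp.toLp_apply, dotProduct, RCLike.inner_apply,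
      conj_trivial, mul_comm]
  set r : Fin d → ℝ := v - eq w with hr
  have hsymmsub : eq.symm v - w = eq.symm r := by
    rw [hr, map_sub, eq.symm_apply_apply]
  have hperp : ∀ y : Fin m → ℝ, (Aᵀ *ᵥ y) ⬝ᵥ r = 0 := by
    intro y
    have hk : eq.symm (Aᵀ *ᵥ y) ∈ K := by
      simp only [K, Submodule.mem_comap, LinearMap.mem_range, Matrix.mulVecLin_apply]
      exact ⟨y, by simp [eq]⟩
    have := (Submodule.mem_orthogonal K _).1 hw _ hk
    rwa [hsymmsub, hinner] at this
  have hker : A *ᵥ r = 0 := by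
    rw [← dotProduct_self_eq_zero (v := A *ᵥ r)]
    have := hperp (A *ᵥ r)
    rwa [dotProduct_comm, dotProduct_mulVec, vecMul_transpose, dotProduct_comm] at this
  have hv : v ⬝ᵥ r = 0 := h r hker
  have hwr : (eq w) ⬝ᵥ r = 0 := by rw [← hu0]; exact hperp u0
  have hrr : r ⬝ᵥ r = 0 := by
    rw [hr]; rw [hr] at hv hwr
    rw [sub_dotProduct, hv, hwr, sub_zero]
  have hr0 : r = 0 := dotProduct_self_eq_zero.1 hrr
  refine ⟨u0, ?_⟩
  rw [hu0]
  have : v - eq w = 0 := hr0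
  ext i
  have := congrFun this i
  simpa [sub_eq_zero] using this

lemma exists_repr {m d : ℕ} {Ω : Type*} [MeasurableSpace Ω]
    (A : Matrix (Fin m) (Fin d) ℝ) (b : Fin m → ℝ) (ω : ℝ)
    (H : ℕ → Ω → Matrix (Fin m) (Fin m) ℝ)
    (x : ℕ → Ω → (Fin d → ℝ)) (x0 : Fin d → ℝ)
    (hx0 : ∀ s, x 0 s = x0)
    (hrec : ∀ k : ℕ, ∀ s,
      x (k + 1) s = x k s - ω • (Aᵀ *ᵥ (H k s *ᵥ (A *ᵥ x k s - b)))) :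
    ∀ k : ℕ, ∃ φ : (((Finset.range k : Finset ℕ)) → Matrix (Fin m) (Fin m) ℝ) → (Fin d → ℝ),
      Measurable φ ∧ ∀ s, x k s = φ (fun i => H (i : ℕ) s) := by
  intro k
  induction k with
  | zero => exact ⟨fun _ => x0, measurable_const, fun s => hx0 s⟩
  | succ k ih =>
    obtain ⟨φ, hφ, hφx⟩ := ih
    let r : (((Finset.range (k+1) : Finset ℕ)) → Matrix (Fin m) (Fin m) ℝ) →
        (((Finset.range k : Finset ℕ)) → Matrix (Fin m) (Fin m) ℝ) :=
      fun g i => g ⟨(i : ℕ), by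
        have := i.2; simp only [Finset.mem_range] at this ⊢; omega⟩
    have hr : Measurable r := measurable_pi_lambda _ fun i => measurable_pi_apply _
    let φ' : (((Finset.range (k+1) : Finset ℕ)) → Matrix (Fin m) (Fin m) ℝ) → (Fin d → ℝ) :=
      fun g => φ (r g) - ω • (Aᵀ *ᵥ (g ⟨k, by simp⟩ *ᵥ (A *ᵥ φ (r g) - b)))
    refine ⟨φ', ?_, ?_⟩
    · have h1 : Measurable fun g : ((Finset.range (k+1) : Finset ℕ)) → Matrix (Fin m) (Fin m) ℝ =>
          φ (r g) := hφ.comp hr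
      have h2 : Measurable fun g : ((Finset.range (k+1) : Finset ℕ)) → Matrix (Fin m) (Fin m) ℝ =>
          g ⟨k, by simp⟩ := measurable_pi_apply _
      have h3 : Measurable fun g : ((Finset.range (k+1) : Finset ℕ)) → Matrix (Fin m) (Fin m) ℝ =>
          A *ᵥ φ (r g) - b := (meas_mulVec measurable_const h1).sub measurable_const
      exact h1.sub ((meas_mulVec measurable_const (meas_mulVec h2 h3)).const_smul ω)
    · intro s
      rw [hrec k s, hφx s]

/-- Independence of a function of `H_0, …, H_{k-1}` from a function of `H_k`. -/
lemma indep_aux {m : ℕ} {Ω : Type*} [MeasurableSpace Ω] {μ : Measure Ω}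
    (H : ℕ → Ω → Matrix (Fin m) (Fin m) ℝ)
    (hHmeas : ∀ k, Measurable (H k))
    (hHiid : iIndepFun H μ) (k : ℕ)
    {α β : Type*} [MeasurableSpace α] [MeasurableSpace β]
    (F : (((Finset.range k : Finset ℕ)) → Matrix (Fin m) (Fin m) ℝ) → α) (hF : Measurable F)
    (G : Matrix (Fin m) (Fin m) ℝ → β) (hG : Measurable G) :
    IndepFun (fun s => F (fun i => H (i : ℕ) s)) (fun s => G (H k s)) μ := by
  have hdisj : Disjoint (Finset.range k) ({k} : Finset ℕ) := by
    simp [Finset.disjoint_singleton_right]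
  have hbase := hHiid.indepFun_finset (Finset.range k) {k} hdisj hHmeas
  have := hbase.comp (φ := F)
    (ψ := fun t : (({k} : Finset ℕ)) → Matrix (Fin m) (Fin m) ℝ => G (t ⟨k, by simp⟩))
    hF (hG.comp (measurable_pi_apply _))
  exact this

end SGDAux

open SGDAux

theorem sgd_L2_linear_convergence {m d : ℕ}
    {Ω : Type*} [MeasurableSpace Ω] (μ : Measure Ω) [IsProbabilityMeasure μ]
    (A : Matrix (Fin m) (Fin d) ℝ) (b : Fin m → ℝ)
    -- the i.i.d. random matrices `H_k`, a.s. symmetric psd with `H A Aᵀ H = H`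
    (H : ℕ → Ω → Matrix (Fin m) (Fin m) ℝ)
    (hHmeas : ∀ k, Measurable (H k))
    (hHiid : iIndepFun H μ)
    (hHident : ∀ k, μ.map (H k) = μ.map (H 0))
    (hHas : ∀ k, ∀ᵐ s ∂μ, (H k s).PosSemidef ∧ H k s * (A * Aᵀ) * H k s = H k s)
    (hHint : ∀ k i j, Integrable (fun s => H k s i j) μ)
    -- `W = E[H_0]`
    (W : Matrix (Fin m) (Fin m) ℝ)
    (hW : ∀ i j, W i j = ∫ s, H 0 s i j ∂μ)
    -- the objective `f` and exactness
    (f : (Fin d → ℝ) → ℝ)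
    (hf : ∀ y, f y = (1 / 2) * ((A *ᵥ y - b) ⬝ᵥ (W *ᵥ (A *ᵥ y - b))))
    (hexact : {y : Fin d → ℝ | f y = 0} = {y : Fin d → ℝ | A *ᵥ y = b})
    -- `λmin⁺`: smallest nonzero eigenvalue of `Aᵀ W A`
    (lmin : ℝ) (hlmin_pos : 0 < lmin)
    (hlmin : ∀ v : Fin d → ℝ, (∃ u, v = Aᵀ *ᵥ u) →
      lmin * (v ⬝ᵥ v) ≤ v ⬝ᵥ ((Aᵀ * W * A) *ᵥ v))
    -- stepsize
    (ω : ℝ) (hω0 : 0 < ω) (hω2 : ω < 2)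
    -- the SGD iterates, started from deterministic `x0`
    (x0 : Fin d → ℝ)
    (x : ℕ → Ω → (Fin d → ℝ))
    (hx0 : ∀ s, x 0 s = x0)
    (hrec : ∀ k : ℕ, ∀ s,
      x (k + 1) s = x k s - ω • (Aᵀ *ᵥ (H k s *ᵥ (A *ᵥ x k s - b))))
    -- `x*` is the orthogonal projection of `x0` onto `{x : A x = b}`
    (xstar : Fin d → ℝ) (hxstar : A *ᵥ xstar = b)
    (hproj : ∀ y : Fin d → ℝ, A *ᵥ y = b →
      (x0 - xstar) ⬝ᵥ (x0 - xstar) ≤ (x0 - y) ⬝ᵥ (x0 - y)) :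
    ∀ k : ℕ, ∫ s, (x k s - xstar) ⬝ᵥ (x k s - xstar) ∂μ
      ≤ (1 - ω * (2 - ω) * lmin) ^ k * ((x0 - xstar) ⬝ᵥ (x0 - xstar)) := by
  classical
  -- notation
  set e : ℕ → Ω → (Fin d → ℝ) := fun k s => x k s - xstar with he
  set e0 : Fin d → ℝ := x0 - xstar with he0
  set C : ℝ := e0 ⬝ᵥ e0 with hC
  set c : ℝ := ω * (2 - ω) with hc
  have hcpos : 0 < c := by rw [hc]; nlinarith
  set ρ : ℝ := 1 - c * lmin with hρ
  -- residual form of recursion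
  have hresid : ∀ k s, A *ᵥ x k s - b = A *ᵥ e k s := by
    intro k s
    rw [he]; simp only []
    rw [mulVec_sub, hxstar]
  have herec : ∀ k s, e (k+1) s = e k s - ω • (Aᵀ *ᵥ (H k s *ᵥ (A *ᵥ e k s))) := by
    intro k s
    rw [he]; simp only []
    rw [hrec k s, hresid k s]
    rw [he]; simp only []
    abel
  -- measurability of iterates
  have hxmeas : ∀ k, Measurable (x k) := by
    intro k
    obtain ⟨φ, hφ, hφx⟩ := exists_repr A b ω H x x0 hx0 hrec k
    have : (x k) = fun s => φ (fun i => H (i : ℕ) s) := funext hφx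
    rw [this]
    exact hφ.comp (measurable_pi_lambda _ fun i => hHmeas (i : ℕ))
  have hemeas : ∀ k, Measurable (e k) := fun k => (hxmeas k).sub measurable_const
  have hEmeas : ∀ k, Measurable (fun s => e k s ⬝ᵥ e k s) := fun k =>
    meas_dot (hemeas k) (hemeas k)
  -- the good event
  have hgood : ∀ᵐ s ∂μ, ∀ k, (H k s).PosSemidef ∧ H k s * (A * Aᵀ) * H k s = H k s :=
    ae_all_iff.mpr hHas
  -- pointwise key identity and bounds on the good event
  have hkey : ∀ s, (∀ k, (H k s).PosSemidef ∧ H k s * (A * Aᵀ) * H k s = H k s) →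
      ∀ k, e (k+1) s ⬝ᵥ e (k+1) s
        = e k s ⬝ᵥ e k s - c * ((A *ᵥ e k s) ⬝ᵥ (H k s *ᵥ (A *ᵥ e k s))) := by
    intro s hs k
    rw [herec k s, hc]
    exact key_id A (H k s) (herm_transpose (hs k).1.1) ((hs k).2) (e k s) ω
  have hquadnn : ∀ s, (∀ k, (H k s).PosSemidef ∧ H k s * (A * Aᵀ) * H k s = H k s) →
      ∀ k, 0 ≤ (A *ᵥ e k s) ⬝ᵥ (H k s *ᵥ (A *ᵥ e k s)) := by
    intro s hs k
    simpa using (hs k).1.dotProduct_mulVec_nonneg (A *ᵥ e k s)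
  have hbound : ∀ s, (∀ k, (H k s).PosSemidef ∧ H k s * (A * Aᵀ) * H k s = H k s) →
      ∀ k, e k s ⬝ᵥ e k s ≤ C := by
    intro s hs k
    induction k with
    | zero => rw [he, hC, he0]; simp only [hx0 s]; exact le_refl _
    | succ k ih =>
      rw [hkey s hs k]
      have := hquadnn s hs k
      nlinarith
  -- integrability of ‖e k‖²
  have hEint : ∀ k, Integrable (fun s => e k s ⬝ᵥ e k s) μ := by
    intro k
    refine Integrable.mono' (integrable_const C) (hEmeas k).aestronglyMeasurable ?_
    filter_upwards [hgood] with s hs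
    rw [Real.norm_eq_abs, abs_of_nonneg (dot_self_nonneg _)]
    exact hbound s hs k
  -- membership of errors in the row space
  have he0range : ∃ u, e0 = Aᵀ *ᵥ u := by
    rw [he0]
    apply mem_range_transpose
    intro z hz
    rcases eq_or_lt_of_le (dot_self_nonneg z) with h | hzz
    · rw [dotProduct_self_eq_zero.1 h.symm, dotProduct_zero]
    · apply proj_orth _ _ hzz
      intro t
      have hy : A *ᵥ (xstar + t • z) = b := by
        rw [mulVec_add, mulVec_smul, hz, smul_zero, add_zero, hxstar]
      have := hproj (xstar + t • z) hy
      rw [hC, he0] at this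
      have h1 : x0 - (xstar + t • z) = (x0 - xstar) - t • z := by abel
      rwa [h1] at this
  have hrange : ∀ k s, ∃ u, e k s = Aᵀ *ᵥ u := by
    intro k s
    induction k with
    | zero =>
      rw [he]; simp only [hx0 s]
      rw [he0] at he0range
      exact he0range
    | succ k ih =>
      obtain ⟨u, hu⟩ := ih
      refine ⟨u - ω • (H k s *ᵥ (A *ᵥ e k s)), ?_⟩
      rw [herec k s, hu, mulVec_sub, mulVec_smul, ← hu]
  -- lower bound via λmin⁺, pointwise
  have hlower : ∀ k s, lmin * (e k s ⬝ᵥ e k s) ≤ (A *ᵥ e k s) ⬝ᵥ (W *ᵥ (A *ᵥ e k s)) := by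
    intro k s
    have h1 := hlmin (e k s) (hrange k s)
    have h2 : (A *ᵥ e k s) ⬝ᵥ (W *ᵥ (A *ᵥ e k s)) = e k s ⬝ᵥ ((Aᵀ * W * A) *ᵥ e k s) := by
      rw [bilin_id, mulVec_mulVec]
    rw [h2]
    exact h1
  -- constants
  have hCnn : 0 ≤ C := dot_self_nonneg e0
  set K : ℝ := ∑ i, ∑ j, |(Aᵀ * A) i j| with hK
  have hKnn : 0 ≤ K :=
    Finset.sum_nonneg fun i _ => Finset.sum_nonneg fun j _ => abs_nonneg _
  have humeas : ∀ k, Measurable fun s => A *ᵥ e k s := fun k =>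
    meas_mulVec measurable_const (hemeas k)
  -- a.e. bound on products of entries of `A e_k`
  have huu : ∀ k s, (A *ᵥ e k s) ⬝ᵥ (A *ᵥ e k s) ≤ K * (e k s ⬝ᵥ e k s) := by
    intro k s
    rw [bilin_id]
    exact (le_abs_self _).trans (quad_bound (Aᵀ * A) (e k s))
  have huij_bound : ∀ k, ∀ᵐ s ∂μ, ∀ i j : Fin m,
      |(A *ᵥ e k s) i * (A *ᵥ e k s) j| ≤ K * C := by
    intro k
    filter_upwards [hgood] with s hs i j
    refine (prod_le_dot_self _ i j).trans ((huu k s).trans ?_)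
    exact mul_le_mul_of_nonneg_left (hbound s hs k) hKnn
  have huijmeas : ∀ k (i j : Fin m),
      Measurable (fun s => (A *ᵥ e k s) i * (A *ᵥ e k s) j) := fun k i j =>
    ((measurable_pi_apply i).comp (humeas k)).mul ((measurable_pi_apply j).comp (humeas k))
  have huijint : ∀ k (i j : Fin m),
      Integrable (fun s => (A *ᵥ e k s) i * (A *ᵥ e k s) j) μ := by
    intro k i j
    refine Integrable.mono' (integrable_const (K * C)) (huijmeas k i j).aestronglyMeasurable ?_
    filter_upwards [huij_bound k] with s hs
    rw [Real.norm_eq_abs]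
    exact hs i j
  -- expectation of entries of `H k`
  have hWent : ∀ k (i j : Fin m), ∫ s, H k s i j ∂μ = W i j := by
    intro k i j
    have hmeas_ent : Measurable (fun M : Matrix (Fin m) (Fin m) ℝ => M i j) :=
      meas_entry measurable_id i j
    have h1 := integral_map (μ := μ) (hHmeas k).aemeasurable
      (f := fun M : Matrix (Fin m) (Fin m) ℝ => M i j) hmeas_ent.aestronglyMeasurable
    have h2 := integral_map (μ := μ) (hHmeas 0).aemeasurable
      (f := fun M : Matrix (Fin m) (Fin m) ℝ => M i j) hmeas_ent.aestronglyMeasurable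
    rw [hW i j, ← h2, ← hHident k, h1]
  -- independence: `∫ u_i u_j H_ij = (∫ u_i u_j) W_ij`
  have hindep : ∀ k (i j : Fin m),
      ∫ s, ((A *ᵥ e k s) i * (A *ᵥ e k s) j) * H k s i j ∂μ
        = (∫ s, (A *ᵥ e k s) i * (A *ᵥ e k s) j ∂μ) * W i j := by
    intro k i j
    obtain ⟨φ, hφ, hφx⟩ := exists_repr A b ω H x x0 hx0 hrec k
    set F : (((Finset.range k : Finset ℕ)) → Matrix (Fin m) (Fin m) ℝ) → ℝ :=
      fun g => (A *ᵥ (φ g - xstar)) i * (A *ᵥ (φ g - xstar)) j with hF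
    have hFmeas : Measurable F := by
      have h1 : Measurable fun g : ((Finset.range k : Finset ℕ)) → Matrix (Fin m) (Fin m) ℝ =>
          A *ᵥ (φ g - xstar) := meas_mulVec measurable_const (hφ.sub measurable_const)
      exact ((measurable_pi_apply i).comp h1).mul ((measurable_pi_apply j).comp h1)
    have heq : (fun s => (A *ᵥ e k s) i * (A *ᵥ e k s) j)
        = fun s => F (fun i => H (i : ℕ) s) := by
      funext s
      rw [hF]
      simp only [he]
      rw [hφx s]
    have hind : IndepFun (fun s => (A *ᵥ e k s) i * (A *ᵥ e k s) j)
        (fun s => H k s i j) μ := by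
      rw [heq]
      exact indep_aux H hHmeas hHiid k F hFmeas (fun M => M i j) (meas_entry measurable_id i j)
    have := hind.integral_mul_eq_mul_integral (huijint k i j).aestronglyMeasurable (hHint k i j).aestronglyMeasurable
    rw [← hWent k i j]
    exact this
  -- integrability of the product terms
  have hprodint : ∀ k (i j : Fin m),
      Integrable (fun s => ((A *ᵥ e k s) i * (A *ᵥ e k s) j) * H k s i j) μ := by
    intro k i j
    refine Integrable.mono' (((hHint k i j).abs.const_mul (K * C)))
      (((huijmeas k i j).mul (meas_entry (hHmeas k) i j)).aestronglyMeasurable) ?_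
    filter_upwards [huij_bound k] with s hs
    rw [Real.norm_eq_abs, abs_mul]
    exact mul_le_mul_of_nonneg_right (hs i j) (abs_nonneg _)
  -- expansion of quadratic forms as sums
  have hgk_eq : ∀ k s, (A *ᵥ e k s) ⬝ᵥ (H k s *ᵥ (A *ᵥ e k s))
      = ∑ i, ∑ j, ((A *ᵥ e k s) i * (A *ᵥ e k s) j) * H k s i j := fun k s =>
    dot_quad_expand (H k s) (A *ᵥ e k s)
  have hWquad_eq : ∀ k s, (A *ᵥ e k s) ⬝ᵥ (W *ᵥ (A *ᵥ e k s))
      = ∑ i, ∑ j, ((A *ᵥ e k s) i * (A *ᵥ e k s) j) * W i j := fun k s =>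
    dot_quad_expand W (A *ᵥ e k s)
  have hgkint : ∀ k, Integrable (fun s => (A *ᵥ e k s) ⬝ᵥ (H k s *ᵥ (A *ᵥ e k s))) μ := by
    intro k
    have : (fun s => (A *ᵥ e k s) ⬝ᵥ (H k s *ᵥ (A *ᵥ e k s)))
        = fun s => ∑ i, ∑ j, ((A *ᵥ e k s) i * (A *ᵥ e k s) j) * H k s i j :=
      funext fun s => hgk_eq k s
    rw [this]
    exact integrable_finset_sum _ fun i _ => integrable_finset_sum _ fun j _ => hprodint k i j
  have hWquadint : ∀ k, Integrable (fun s => (A *ᵥ e k s) ⬝ᵥ (W *ᵥ (A *ᵥ e k s))) μ := by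
    intro k
    have : (fun s => (A *ᵥ e k s) ⬝ᵥ (W *ᵥ (A *ᵥ e k s)))
        = fun s => ∑ i, ∑ j, ((A *ᵥ e k s) i * (A *ᵥ e k s) j) * W i j :=
      funext fun s => hWquad_eq k s
    rw [this]
    exact integrable_finset_sum _ fun i _ => integrable_finset_sum _ fun j _ =>
      (huijint k i j).mul_const (W i j)
  -- Step B: tower rule
  have hB : ∀ k, ∫ s, (A *ᵥ e k s) ⬝ᵥ (H k s *ᵥ (A *ᵥ e k s)) ∂μ
      = ∫ s, (A *ᵥ e k s) ⬝ᵥ (W *ᵥ (A *ᵥ e k s)) ∂μ := by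
    intro k
    have h1 : (fun s => (A *ᵥ e k s) ⬝ᵥ (H k s *ᵥ (A *ᵥ e k s)))
        = fun s => ∑ i, ∑ j, ((A *ᵥ e k s) i * (A *ᵥ e k s) j) * H k s i j :=
      funext fun s => hgk_eq k s
    have h2 : (fun s => (A *ᵥ e k s) ⬝ᵥ (W *ᵥ (A *ᵥ e k s)))
        = fun s => ∑ i, ∑ j, ((A *ᵥ e k s) i * (A *ᵥ e k s) j) * W i j :=
      funext fun s => hWquad_eq k s
    rw [h1, h2]
    rw [integral_finset_sum _ fun i _ => integrable_finset_sum _ fun j _ => hprodint k i j,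
      integral_finset_sum _ fun i _ => integrable_finset_sum _ fun j _ =>
        (huijint k i j).mul_const (W i j)]
    refine Finset.sum_congr rfl fun i _ => ?_
    rw [integral_finset_sum _ fun j _ => hprodint k i j,
      integral_finset_sum _ fun j _ => (huijint k i j).mul_const (W i j)]
    refine Finset.sum_congr rfl fun j _ => ?_
    rw [hindep k i j, integral_mul_const]
  -- Step A: one-step expectation identity
  have hA : ∀ k, ∫ s, e (k+1) s ⬝ᵥ e (k+1) s ∂μ
      = ∫ s, e k s ⬝ᵥ e k s ∂μ
        - c * ∫ s, (A *ᵥ e k s) ⬝ᵥ (H k s *ᵥ (A *ᵥ e k s)) ∂μ := by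
    intro k
    have hcong : ∫ s, e (k+1) s ⬝ᵥ e (k+1) s ∂μ
        = ∫ s, (e k s ⬝ᵥ e k s - c * ((A *ᵥ e k s) ⬝ᵥ (H k s *ᵥ (A *ᵥ e k s)))) ∂μ := by
      refine integral_congr_ae ?_
      filter_upwards [hgood] with s hs
      exact hkey s hs k
    rw [hcong, integral_sub (hEint k) ((hgkint k).const_mul c), integral_const_mul]
  -- Step D: lower bound on the expected quadratic form
  have hD : ∀ k, lmin * ∫ s, e k s ⬝ᵥ e k s ∂μ
      ≤ ∫ s, (A *ᵥ e k s) ⬝ᵥ (W *ᵥ (A *ᵥ e k s)) ∂μ := by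
    intro k
    rw [← integral_const_mul]
    exact integral_mono ((hEint k).const_mul lmin) (hWquadint k) fun s => hlower k s
  -- one-step contraction
  have hstep : ∀ k, ∫ s, e (k+1) s ⬝ᵥ e (k+1) s ∂μ ≤ ρ * ∫ s, e k s ⬝ᵥ e k s ∂μ := by
    intro k
    rw [hA k, hρ]
    have h1 := (hD k).trans (le_of_eq (hB k).symm)
    nlinarith [h1, hcpos]
  -- degenerate case: `x0` already solves the system
  by_cases hC0 : C = 0
  · have hx0star : x0 = xstar := by
      have : e0 = 0 := dotProduct_self_eq_zero.1 hC0
      rw [he0] at this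
      rwa [sub_eq_zero] at this
    have hzero : ∀ k s, e k s = 0 := by
      intro k
      induction k with
      | zero => intro s; rw [he]; simp only [hx0 s, hx0star, sub_self]
      | succ k ih =>
        intro s
        rw [herec k s, ih s]
        simp
    intro k
    have hgoal : ∫ s, (x k s - xstar) ⬝ᵥ (x k s - xstar) ∂μ = 0 := by
      have : (fun s => (x k s - xstar) ⬝ᵥ (x k s - xstar)) = fun _ => (0:ℝ) := by
        funext s
        have := hzero k s
        rw [he] at this
        simp only [] at this
        rw [this, zero_dotProduct]
      rw [this, integral_zero]
    rw [hgoal, hC0, mul_zero]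
  · -- nondegenerate case: `ρ ≥ 0`
    have hCpos : 0 < C := lt_of_le_of_ne hCnn (Ne.symm hC0)
    -- `lmin ≤ 1`
    have hlmin1 : lmin ≤ 1 := by
      -- E[(A e0)ᵀ H0 (A e0)] ≤ ‖e0‖²
      have hptwise : ∀ᵐ s ∂μ, (A *ᵥ e0) ⬝ᵥ (H 0 s *ᵥ (A *ᵥ e0)) ≤ C := by
        filter_upwards [hgood] with s hs
        rw [hC]
        exact contraction A (H 0 s) (hs 0).1 (hs 0).2 e0
      have hexp_eq : (A *ᵥ e0) ⬝ᵥ (W *ᵥ (A *ᵥ e0))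
          = ∫ s, (A *ᵥ e0) ⬝ᵥ (H 0 s *ᵥ (A *ᵥ e0)) ∂μ := by
        have h1 : ∀ s, (A *ᵥ e0) ⬝ᵥ (H 0 s *ᵥ (A *ᵥ e0))
            = ∑ i, ∑ j, ((A *ᵥ e0) i * (A *ᵥ e0) j) * H 0 s i j := fun s =>
          dot_quad_expand (H 0 s) (A *ᵥ e0)
        have h2 : (A *ᵥ e0) ⬝ᵥ (W *ᵥ (A *ᵥ e0))
            = ∑ i, ∑ j, ((A *ᵥ e0) i * (A *ᵥ e0) j) * W i j :=
          dot_quad_expand W (A *ᵥ e0)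
        rw [h2, show (fun s => (A *ᵥ e0) ⬝ᵥ (H 0 s *ᵥ (A *ᵥ e0)))
            = fun s => ∑ i, ∑ j, ((A *ᵥ e0) i * (A *ᵥ e0) j) * H 0 s i j from funext h1]
        rw [integral_finset_sum _ fun i _ => integrable_finset_sum _ fun j _ =>
          (hHint 0 i j).const_mul _]
        refine Finset.sum_congr rfl fun i _ => ?_
        rw [integral_finset_sum _ fun j _ => (hHint 0 i j).const_mul _]
        refine Finset.sum_congr rfl fun j _ => ?_
        rw [integral_const_mul _ _, hWent 0 i j]
      have hint1 : Integrable (fun s => (A *ᵥ e0) ⬝ᵥ (H 0 s *ᵥ (A *ᵥ e0))) μ := by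
        have h1 : (fun s => (A *ᵥ e0) ⬝ᵥ (H 0 s *ᵥ (A *ᵥ e0)))
            = fun s => ∑ i, ∑ j, ((A *ᵥ e0) i * (A *ᵥ e0) j) * H 0 s i j :=
          funext fun s => dot_quad_expand (H 0 s) (A *ᵥ e0)
        rw [h1]
        exact integrable_finset_sum _ fun i _ => integrable_finset_sum _ fun j _ =>
          (hHint 0 i j).const_mul _
      have hEle : (A *ᵥ e0) ⬝ᵥ (W *ᵥ (A *ᵥ e0)) ≤ C := by
        rw [hexp_eq]
        calc ∫ s, (A *ᵥ e0) ⬝ᵥ (H 0 s *ᵥ (A *ᵥ e0)) ∂μ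
            ≤ ∫ _, C ∂μ := integral_mono_ae hint1 (integrable_const C) hptwise
          _ = C := by simp
      have h1 := hlmin e0 he0range
      have h2 : (A *ᵥ e0) ⬝ᵥ (W *ᵥ (A *ᵥ e0)) = e0 ⬝ᵥ ((Aᵀ * W * A) *ᵥ e0) := by
        rw [bilin_id, mulVec_mulVec]
      rw [← h2] at h1
      rw [← hC] at h1
      nlinarith
    have hρnn : 0 ≤ ρ := by
      rw [hρ, hc]
      nlinarith [sq_nonneg (ω - 1)]
    -- main induction
    intro k
    have hmain : ∀ k, ∫ s, e k s ⬝ᵥ e k s ∂μ ≤ ρ ^ k * C := by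
      intro k
      induction k with
      | zero =>
        have : (fun s => e 0 s ⬝ᵥ e 0 s) = fun _ => C := by
          funext s
          rw [he, hC, he0]; simp only [hx0 s]
        rw [this]
        simp
      | succ k ih =>
        calc ∫ s, e (k+1) s ⬝ᵥ e (k+1) s ∂μ ≤ ρ * ∫ s, e k s ⬝ᵥ e k s ∂μ := hstep k
          _ ≤ ρ * (ρ ^ k * C) := mul_le_mul_of_nonneg_left ih hρnn
          _ = ρ ^ (k+1) * C := by ring
    exact hmain k
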